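/- Let R be a ring, M an R-module, and φ : (E, P) → (F, Q) a morphism of poset filtrations of M which is an order-embedding. If (F, Q) is distributive and for all p ∈ P we have F^{<φ(p)} ⊆ E^{<p}, then (E, P) is distributive. -/
import Mathlib


/-- Let `R` be a ring, `M` an `R`-module, and `φ : (E, P) → (F, Q)` a
morphism of poset filtrations of `M` (i.e. `φ : P → Q` is order-preserving and `F ∘ φ = E`)
which is an order-embedding (injective and order-reflecting).  If `(F, Q)` is distributive
and for all `p ∈ P` we have `F^{<φ(p)} ⊆ E^{<p}`, then `(E, P)` is distributive.

Distributivity of a poset filtration `(G, P)`: for every finite `S ⊆ P` and every `p`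
maximal in `S`, `G p ⊓ Σ_{q ∈ S \ {p}} G q ⊆ G^{<p}`, where `G^{<p} = Σ_{q < p} G q`. -/
theorem stmt15
    {R : Type*} [Ring R] {M : Type*} [AddCommGroup M] [Module R M]
    {P : Type*} [PartialOrder P] {Q : Type*} [PartialOrder Q]
    (E : P → Submodule R M) (hE : Monotone E)
    (F : Q → Submodule R M) (hF : Monotone F)
    (φ : P → Q) (hφmono : Monotone φ) (hφinj : Function.Injective φ)
    (hφrefl : ∀ p p' : P, φ p ≤ φ p' → p ≤ p')
    (hφcomp : ∀ p : P, F (φ p) = E p)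
    (hFdist : ∀ S : Finset Q, ∀ q ∈ S, (∀ q' ∈ S, q ≤ q' → q' = q) →
      F q ⊓ (⨆ q' ∈ S, ⨆ (_ : q' ≠ q), F q') ≤ ⨆ q' : Q, ⨆ (_ : q' < q), F q')
    (hlt : ∀ p : P, (⨆ q : Q, ⨆ (_ : q < φ p), F q) ≤ ⨆ p' : P, ⨆ (_ : p' < p), E p') :
    ∀ S : Finset P, ∀ p ∈ S, (∀ p' ∈ S, p ≤ p' → p' = p) →
      E p ⊓ (⨆ p' ∈ S, ⨆ (_ : p' ≠ p), E p') ≤ ⨆ p' : P, ⨆ (_ : p' < p), E p' := by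
  classical
  intro S p hpS hmax
  have key := hFdist (S.image φ) (φ p) (Finset.mem_image_of_mem φ hpS) ?_
  · refine le_trans ?_ ((key.trans (hlt p)))
    refine inf_le_inf ?_ ?_
    · rw [hφcomp]
    · refine iSup_le fun p' => iSup_le fun hp' => iSup_le fun hne => ?_
      have : φ p' ≠ φ p := fun h => hne (hφinj h)
      refine le_trans ?_ (le_iSup_of_le (φ p') (le_iSup_of_le (Finset.mem_image_of_mem φ hp') (le_iSup_of_le this le_rfl)))
      rw [hφcomp]
  · intro q' hq' hle
    obtain ⟨p'', hp'', rfl⟩ := Finset.mem_image.mp hq'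
    exact congrArg φ (hmax p'' hp'' (hφrefl _ _ hle))
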